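/- Let V be a vector space over a field 𝔽, n ≥ 2, f an n-linear map on V, and ℬ a basis of V. Then V decomposes as the f-orthogonal direct sum V = ⊕_{[e_i] ∈ ℬ/∼} V_{[e_i]} of the linear subspaces V_{[e_i]}; that is, V is the (internal) direct sum of the subspaces V_{[e_i]} and distinct summands are pairwise f-orthogonal. -/

import Mathlib

/- Common setting: `V` is a vector space over a field `𝔽`, and `f` is an
`n`-linear map on `V` where `n = m + 1 ≥ 2` (i.e. `1 ≤ m`).  Tuples of
length `n - 1 = m` index the last arguments of the set-valued map `F`. -/

open scoped Classical

noncomputable section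

variable {𝔽 V I : Type*}

/-- The set `V* = V \ {0}` of nonzero vectors. -/
abbrev Vstar (V : Type*) [Zero V] := {v : V // v ≠ 0}

/-- The disjoint union `ℬ ∪̇ ℬ̄`, encoded by indices: `(false, i)` stands for the
basis vector `e i ∈ ℬ` and `(true, i)` for the formal bar symbol `ē i ∈ ℬ̄`. -/
abbrev BSym (I : Type*) := Bool × I

/-- The bar-swap on `ℬ ∪̇ ℬ̄`. -/
def barSwap {I : Type*} (s : BSym I) : BSym I := (!s.1, s.2)

variable [Field 𝔽] [AddCommGroup V] [Module 𝔽 V] {m : ℕ}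

/-- A basis vector, as an element of `V*`. -/
def bstar (b : Module.Basis I 𝔽 V) (i : I) : Vstar V := ⟨b i, b.ne_zero i⟩

/-- The set-valued map `F : 𝒫(V*) × (ℬ ∪̇ ℬ̄)^{n-1} → 𝒫(V*)` associated to the
`n`-linear map `f` and the basis `b` (here `n = m + 1`). -/
def Fmap (b : Module.Basis I 𝔽 V) (f : MultilinearMap 𝔽 (fun _ : Fin (m + 1) => V) V)
    (U : Set (Vstar V)) (ξ : Fin m → BSym I) : Set (Vstar V) :=
  if ∀ t, (ξ t).1 = false then
    {w | ∃ (k : Fin (m + 1)) (σ : Equiv.Perm (Fin m)), ∃ u ∈ U,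
      f (Fin.insertNth k u.1 fun t => b (ξ (σ t)).2) = w.1}
  else if ∀ t, (ξ t).1 = true then
    {w | ∃ (k : Fin (m + 1)) (σ : Equiv.Perm (Fin m)), ∃ u ∈ U,
      f (Fin.insertNth k w.1 fun t => b (ξ (σ t)).2) = u.1}
  else ∅

/-- Iterated application of `F` along a list of `(n-1)`-tuples. -/
def iterF (b : Module.Basis I 𝔽 V) (f : MultilinearMap 𝔽 (fun _ : Fin (m + 1) => V) V) :
    Set (Vstar V) → List (Fin m → BSym I) → Set (Vstar V)
  | U, [] => U
  | U, X :: Xs => iterF b f (Fmap b f U X) Xs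

/-- `X` is a connection from `e i` to `e j`.  (Since `F(∅,⋯) = ∅`, the requirement
that all intermediate iterated images are nonempty is equivalent to the final
image containing `e j`.) -/
def IsConnection (b : Module.Basis I 𝔽 V) (f : MultilinearMap 𝔽 (fun _ : Fin (m + 1) => V) V)
    (i j : I) (X : List (Fin m → BSym I)) : Prop :=
  X ≠ [] ∧ bstar b j ∈ iterF b f {bstar b i} X

/-- `e i` is connected to `e j`. -/
def Connected (b : Module.Basis I 𝔽 V) (f : MultilinearMap 𝔽 (fun _ : Fin (m + 1) => V) V)
    (i j : I) : Prop :=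
  i = j ∨ ∃ X : List (Fin m → BSym I), IsConnection b f i j X

/-- Two subspaces `W₁, W₂` are `f`-orthogonal. -/
def FOrthogonal (f : MultilinearMap 𝔽 (fun _ : Fin (m + 1) => V) V)
    (W₁ W₂ : Submodule 𝔽 V) : Prop :=
  ∀ k₁ k₂ : Fin (m + 1), k₁ ≠ k₂ →
    ∀ v : Fin (m + 1) → V, v k₁ ∈ W₁ → v k₂ ∈ W₂ → f v = 0

/-- A subspace `W` is strongly `f`-invariant: `f(V,…,W,…,V) ⊆ W` for every slot. -/
def StronglyInvariant (f : MultilinearMap 𝔽 (fun _ : Fin (m + 1) => V) V)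
    (W : Submodule 𝔽 V) : Prop :=
  ∀ (k : Fin (m + 1)) (v : Fin (m + 1) → V), v k ∈ W → f v ∈ W

/-- `V_{[e i]}`, the span of the connection class of `e i`. -/
def classSpan (b : Module.Basis I 𝔽 V) (f : MultilinearMap 𝔽 (fun _ : Fin (m + 1) => V) V)
    (i : I) : Submodule 𝔽 V :=
  Submodule.span 𝔽 (⇑b '' {j | Connected b f i j})

/-- The projection `Π_{V_{[e c]}} : V → V_{[e c]}` relative to the decomposition
`V = ⊕ V_{[e i]}` (expressed through basis coordinates). -/
def projClass (b : Module.Basis I 𝔽 V) (f : MultilinearMap 𝔽 (fun _ : Fin (m + 1) => V) V)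
    (c : I) : V →ₗ[𝔽] V :=
  b.constr 𝔽 fun j => if Connected b f c j then b j else 0

/-- One step of the relation `≈`: the sum over `k₁ < k₂` of
`Π_{V_{[c]}}(f(V,…,V_{[d]},…,V_{[d]},…,V)) + Π_{V_{[d]}}(f(V,…,V_{[c]},…,V_{[c]},…,V))`
is nonzero. -/
def ApproxStep (b : Module.Basis I 𝔽 V) (f : MultilinearMap 𝔽 (fun _ : Fin (m + 1) => V) V)
    (c d : I) : Prop :=
  ∃ k₁ k₂ : Fin (m + 1), k₁ < k₂ ∧
    ((∃ v : Fin (m + 1) → V, v k₁ ∈ classSpan b f d ∧ v k₂ ∈ classSpan b f d ∧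
        projClass b f c (f v) ≠ 0) ∨
     (∃ v : Fin (m + 1) → V, v k₁ ∈ classSpan b f c ∧ v k₂ ∈ classSpan b f c ∧
        projClass b f d (f v) ≠ 0))

/-- `V_{[e i]} ≈ V_{[e j]}`: either they coincide (same connection class) or they are
linked by a finite chain of classes with nonvanishing projection sums. -/
def Approx (b : Module.Basis I 𝔽 V) (f : MultilinearMap 𝔽 (fun _ : Fin (m + 1) => V) V)
    (i j : I) : Prop :=
  Relation.ReflTransGen (fun c d => Connected b f c d ∨ ApproxStep b f c d) i j

/-- `⌢V_{[e i]} = ⊕_{V_{[e j]} ∈ [V_{[e i]}]} V_{[e j]}`. -/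
def hatSpan (b : Module.Basis I 𝔽 V) (f : MultilinearMap 𝔽 (fun _ : Fin (m + 1) => V) V)
    (i : I) : Submodule 𝔽 V :=
  Submodule.span 𝔽 (⇑b '' {j | Approx b f i j})

/-- Two decompositions of `V` as `f`-orthogonal direct sums of strongly `f`-invariant
subspaces (given as the sets of their summands) are isomorphic: there is a linear
automorphism `h` of `V` commuting with `f` carrying the summands of the first
bijectively onto the summands of the second. -/
def IsoDecomp (f : MultilinearMap 𝔽 (fun _ : Fin (m + 1) => V) V)
    (S T : Set (Submodule 𝔽 V)) : Prop :=
  ∃ h : V ≃ₗ[𝔽] V,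
    (∀ v : Fin (m + 1) → V, f (fun k => h (v k)) = h (f v)) ∧
    (Submodule.map (h : V →ₗ[𝔽] V)) '' S = T

/-- `X` is a strongly `f'`-invariant subspace of `W`, where `f'` is the restriction of
`f` to `W`: `f(W,…,X,…,W) ⊆ X` for every slot. -/
def SInvIn (f : MultilinearMap 𝔽 (fun _ : Fin (m + 1) => V) V)
    (W X : Submodule 𝔽 V) : Prop :=
  ∀ (k : Fin (m + 1)) (v : Fin (m + 1) → V), (∀ t, v t ∈ W) → v k ∈ X → f v ∈ X

/-- `W` is `f'`-simple, `f'` being the restriction of `f` to `W`: the restricted map is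
nonzero and the only strongly `f'`-invariant subspaces of `W` are `0` and `W`. -/
def SimpleIn (f : MultilinearMap 𝔽 (fun _ : Fin (m + 1) => V) V)
    (W : Submodule 𝔽 V) : Prop :=
  (∃ v : Fin (m + 1) → V, (∀ t, v t ∈ W) ∧ f v ≠ 0) ∧
  ∀ X : Submodule 𝔽 V, X ≤ W → SInvIn f W X → X = ⊥ ∨ X = W

/-- The annihilator of the restriction `f'` of `f` to `W`. -/
def annIn (f : MultilinearMap 𝔽 (fun _ : Fin (m + 1) => V) V)
    (W : Submodule 𝔽 V) : Set V :=
  {w | w ∈ W ∧ ∀ (k : Fin (m + 1)) (v : Fin (m + 1) → V),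
    (∀ t, v t ∈ W) → v k = w → f v = 0}

/-- `𝓘(w)`: the smallest strongly `f'`-invariant subspace of `W` containing `w`
(equivalently, the ideal of `(W, f')` generated by `w`). -/
def idealGenIn (f : MultilinearMap 𝔽 (fun _ : Fin (m + 1) => V) V)
    (W : Submodule 𝔽 V) (w : V) : Submodule 𝔽 V :=
  sInf {X : Submodule 𝔽 V | X ≤ W ∧ SInvIn f W X ∧ w ∈ X}

/-- `S` is an `i`-division basis of `W` with respect to the restriction `f'` of `f`:
whenever `c ∈ S`, `b₁, …, b_{n-1} ∈ W` and `f'(b₁,…,c,…,b_{n-1}) = w ≠ 0` with `c` in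
some slot `k`, then `c, b₁, …, b_{n-1} ∈ 𝓘(w)`. -/
def IDivisionBasisIn (f : MultilinearMap 𝔽 (fun _ : Fin (m + 1) => V) V)
    (W : Submodule 𝔽 V) (S : Set V) : Prop :=
  ∀ c ∈ S, ∀ (k : Fin (m + 1)) (v : Fin (m + 1) → V),
    (∀ t, v t ∈ W) → v k = c → f v ≠ 0 → ∀ t, v t ∈ idealGenIn f W (f v)


section Aux

variable (b : Module.Basis I 𝔽 V) (f : MultilinearMap 𝔽 (fun _ : Fin (m + 1) => V) V)

/-- barSwap applied componentwise to a tuple. -/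
def gbar (ξ : Fin m → BSym I) : Fin m → BSym I := fun t => barSwap (ξ t)

lemma Fmap_mono {U U' : Set (Vstar V)} (h : U ⊆ U') (ξ : Fin m → BSym I) :
    Fmap b f U ξ ⊆ Fmap b f U' ξ := by
  unfold Fmap
  split_ifs with h1 h2
  · rintro w ⟨k, σ, u, hu, he⟩; exact ⟨k, σ, u, h hu, he⟩
  · rintro w ⟨k, σ, u, hu, he⟩; exact ⟨k, σ, u, h hu, he⟩
  · exact Set.Subset.rfl

lemma mem_Fmap_iff {U : Set (Vstar V)} {ξ : Fin m → BSym I} {w : Vstar V} :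
    w ∈ Fmap b f U ξ ↔ ∃ u ∈ U, w ∈ Fmap b f {u} ξ := by
  constructor
  · intro hw
    unfold Fmap at hw ⊢
    split_ifs at hw ⊢ with h1 h2
    · obtain ⟨k, σ, u, hu, he⟩ := hw
      exact ⟨u, hu, k, σ, u, rfl, he⟩
    · obtain ⟨k, σ, u, hu, he⟩ := hw
      exact ⟨u, hu, k, σ, u, rfl, he⟩
    · exact absurd hw (Set.notMem_empty w)
  · rintro ⟨u, hu, hw⟩
    exact Fmap_mono b f (Set.singleton_subset_iff.mpr hu) ξ hw

lemma iterF_mono {U U' : Set (Vstar V)} (h : U ⊆ U') (X : List (Fin m → BSym I)) :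
    iterF b f U X ⊆ iterF b f U' X := by
  induction X generalizing U U' with
  | nil => exact h
  | cons ξ Xs ih => exact ih (Fmap_mono b f h ξ)

lemma iterF_append (U : Set (Vstar V)) (X Y : List (Fin m → BSym I)) :
    iterF b f U (X ++ Y) = iterF b f (iterF b f U X) Y := by
  induction X generalizing U with
  | nil => rfl
  | cons ξ Xs ih => simp only [List.cons_append, iterF]; exact ih _

lemma mem_iterF_iff {U : Set (Vstar V)} {X : List (Fin m → BSym I)} {w : Vstar V} :
    w ∈ iterF b f U X ↔ ∃ u ∈ U, w ∈ iterF b f {u} X := by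
  induction X generalizing U with
  | nil => simp [iterF]
  | cons ξ Xs ih =>
    simp only [iterF]
    rw [ih]
    constructor
    · rintro ⟨u', hu', hw⟩
      obtain ⟨u, hu, hu'2⟩ := (mem_Fmap_iff b f).mp hu'
      refine ⟨u, hu, ?_⟩
      rw [ih]
      exact ⟨u', hu'2, hw⟩
    · rintro ⟨u, hu, hw⟩
      rw [ih] at hw
      obtain ⟨u', hu', hw⟩ := hw
      exact ⟨u', Fmap_mono b f (Set.singleton_subset_iff.mpr hu) ξ hu', hw⟩

lemma rev_step (hm : 1 ≤ m) {u w : Vstar V} {ξ : Fin m → BSym I}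
    (h : w ∈ Fmap b f {u} ξ) : u ∈ Fmap b f {w} (gbar ξ) := by
  have t0 : Fin m := ⟨0, hm⟩
  unfold Fmap at h ⊢
  by_cases h1 : ∀ t, (ξ t).1 = false
  · rw [if_pos h1] at h
    rw [if_neg (by intro hall; have := hall t0; simp [gbar, barSwap, h1 t0] at this),
      if_pos (fun t => by simp [gbar, barSwap, h1 t])]
    obtain ⟨k, σ, u', hu', he⟩ := h
    rw [Set.mem_singleton_iff] at hu'; subst hu'
    exact ⟨k, σ, w, rfl, he⟩
  · by_cases h2 : ∀ t, (ξ t).1 = true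
    · rw [if_neg (by intro hall; have := hall t0; simp [h2 t0] at this), if_pos h2] at h
      rw [if_pos (fun t => by simp [gbar, barSwap, h2 t])]
      obtain ⟨k, σ, u', hu', he⟩ := h
      rw [Set.mem_singleton_iff] at hu'; subst hu'
      exact ⟨k, σ, w, rfl, he⟩
    · rw [if_neg h1, if_neg h2] at h
      exact absurd h (Set.notMem_empty w)

lemma rev_iter (hm : 1 ≤ m) {u w : Vstar V} {X : List (Fin m → BSym I)}
    (h : w ∈ iterF b f {u} X) : u ∈ iterF b f {w} (X.reverse.map gbar) := by
  induction X generalizing u with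
  | nil =>
    simp only [iterF, Set.mem_singleton_iff] at h
    simp [iterF, h]
  | cons ξ Xs ih =>
    simp only [iterF] at h
    obtain ⟨u', hu', hw⟩ := (mem_iterF_iff b f).mp h
    have h1 : u' ∈ iterF b f {w} (Xs.reverse.map gbar) := ih hw
    have h2 : u ∈ Fmap b f {u'} (gbar ξ) := rev_step b f hm hu'
    have : (ξ :: Xs).reverse.map gbar = Xs.reverse.map gbar ++ [gbar ξ] := by
      simp
    rw [this, iterF_append]
    exact Fmap_mono b f (Set.singleton_subset_iff.mpr h1) (gbar ξ) h2

lemma connected_refl (i : I) : Connected b f i i := Or.inl rfl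

lemma connected_symm (hm : 1 ≤ m) {i j : I} (h : Connected b f i j) :
    Connected b f j i := by
  rcases h with rfl | ⟨X, hne, hmem⟩
  · exact Or.inl rfl
  · refine Or.inr ⟨X.reverse.map gbar, by simpa using hne, ?_⟩
    exact rev_iter b f hm hmem

lemma connected_trans {i j k : I} (hij : Connected b f i j)
    (hjk : Connected b f j k) : Connected b f i k := by
  rcases hij with rfl | ⟨X, hXne, hX⟩
  · exact hjk
  rcases hjk with rfl | ⟨Y, hYne, hY⟩
  · exact Or.inr ⟨X, hXne, hX⟩
  refine Or.inr ⟨X ++ Y, by simp [hXne], ?_⟩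
  rw [iterF_append]
  exact iterF_mono b f (Set.singleton_subset_iff.mpr hX) Y hY

/-- If `f` of a tuple of basis vectors is nonzero then the indices in any two
distinct slots are connected. -/
lemma connected_of_apply (hm : 1 ≤ m) {k₁ k₂ : Fin (m + 1)} (hk : k₁ ≠ k₂)
    (r : Fin (m + 1) → I) (hne : f (fun t => b (r t)) ≠ 0) :
    Connected b f (r k₁) (r k₂) := by
  have t0 : Fin m := ⟨0, hm⟩
  set w : Vstar V := ⟨f (fun t => b (r t)), hne⟩ with hw
  set ξ : Fin m → BSym I := fun t => (false, r (k₁.succAbove t)) with hξ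
  set ξ' : Fin m → BSym I := fun t => (true, r (k₂.succAbove t)) with hξ'
  have hstep1 : w ∈ Fmap b f {bstar b (r k₁)} ξ := by
    unfold Fmap
    rw [if_pos (fun t => rfl)]
    refine ⟨k₁, 1, bstar b (r k₁), rfl, ?_⟩
    show f (Fin.insertNth k₁ ((fun t => b (r t)) k₁)
      (fun t => b (r (k₁.succAbove ((1 : Equiv.Perm (Fin m)) t))))) = w.1
    simp only [Equiv.Perm.coe_one, id_eq]
    rw [show (fun t => b (r (k₁.succAbove t))) =
      Fin.removeNth k₁ (fun t => b (r t)) from rfl]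
    simp
    rfl
  have hstep2 : bstar b (r k₂) ∈ Fmap b f {w} ξ' := by
    unfold Fmap
    rw [if_neg (by intro hall; exact absurd (hall t0) (by simp [hξ'])),
      if_pos (fun t => rfl)]
    refine ⟨k₂, 1, w, rfl, ?_⟩
    show f (Fin.insertNth k₂ ((fun t => b (r t)) k₂)
      (fun t => b (r (k₂.succAbove ((1 : Equiv.Perm (Fin m)) t))))) = w.1
    simp only [Equiv.Perm.coe_one, id_eq]
    rw [show (fun t => b (r (k₂.succAbove t))) =
      Fin.removeNth k₂ (fun t => b (r t)) from rfl]
    simp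
    rfl
  refine Or.inr ⟨[ξ, ξ'], by simp, ?_⟩
  show bstar b (r k₂) ∈ Fmap b f (Fmap b f {bstar b (r k₁)} ξ) ξ'
  exact Fmap_mono b f (Set.singleton_subset_iff.mpr hstep1) ξ' hstep2

lemma mem_classSpan_iff {x : V} {i : I} :
    x ∈ classSpan b f i ↔ ↑(b.repr x).support ⊆ {j | Connected b f i j} :=
  b.mem_span_image

lemma classSpan_eq_of_connected (hm : 1 ≤ m) {c d : I} (h : Connected b f c d) :
    classSpan b f c = classSpan b f d := by
  unfold classSpan
  congr 1
  ext j
  constructor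
  · rintro ⟨p, hp, rfl⟩
    exact ⟨p, connected_trans b f (connected_symm b f hm h) hp, rfl⟩
  · rintro ⟨p, hp, rfl⟩
    exact ⟨p, connected_trans b f h hp, rfl⟩

lemma connected_of_classSpan_eq {c d : I}
    (h : classSpan b f c = classSpan b f d) : Connected b f c d := by
  have hd : b d ∈ classSpan b f d :=
    Submodule.subset_span ⟨d, connected_refl b f d, rfl⟩
  rw [← h, mem_classSpan_iff] at hd
  apply hd
  rw [b.repr_self]
  simp [Finsupp.support_single_ne_zero]

/-- Key orthogonality lemma. -/
lemma forth_of_not_connected (hm : 1 ≤ m) {c d : I} (hcd : ¬ Connected b f c d)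
    {k₁ k₂ : Fin (m + 1)} (hk : k₁ ≠ k₂) (v : Fin (m + 1) → V)
    (h₁ : v k₁ ∈ classSpan b f c) (h₂ : v k₂ ∈ classSpan b f d) : f v = 0 := by
  have hv : v = fun t => ∑ j ∈ (b.repr (v t)).support, b.repr (v t) j • b j := by
    funext t
    conv_lhs => rw [← b.linearCombination_repr (v t)]
    rfl
  rw [hv, MultilinearMap.map_sum_finset]
  apply Finset.sum_eq_zero
  intro r hr
  rw [Fintype.mem_piFinset] at hr
  have hc : Connected b f c (r k₁) := (mem_classSpan_iff b f).mp h₁ (hr k₁)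
  have hd : Connected b f d (r k₂) := (mem_classSpan_iff b f).mp h₂ (hr k₂)
  have hnc : ¬ Connected b f (r k₁) (r k₂) := by
    intro h
    exact hcd (connected_trans b f hc
      (connected_trans b f h (connected_symm b f hm hd)))
  have hz : f (fun t => b (r t)) = 0 := by
    by_contra hne
    exact hnc (connected_of_apply b f hm hk r hne)
  rw [show (fun t => b.repr (v t) (r t) • b (r t)) =
    (fun t => (fun s : Fin (m+1) => b.repr (v s) (r s)) t • (fun s => b (r s)) t)
    from rfl, MultilinearMap.map_smul_univ, hz, smul_zero]

end Aux

/-- `V` is the `f`-orthogonal internal direct sum of the `V_{[e i]}`. -/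
theorem stmt6 (hm : 1 ≤ m) (b : Module.Basis I 𝔽 V)
    (f : MultilinearMap 𝔽 (fun _ : Fin (m + 1) => V) V) :
    iSupIndep (fun W : {W : Submodule 𝔽 V // ∃ i, W = classSpan b f i} => W.1) ∧
    (⨆ W : {W : Submodule 𝔽 V // ∃ i, W = classSpan b f i}, W.1) = ⊤ ∧
    (∀ W₁ W₂ : {W : Submodule 𝔽 V // ∃ i, W = classSpan b f i},
      W₁ ≠ W₂ → FOrthogonal f W₁.1 W₂.1) := by
  have hne_span : ∀ {c d : I}, classSpan b f c ≠ classSpan b f d →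
      ¬ Connected b f c d := fun h hcon =>
    h (classSpan_eq_of_connected b f hm hcon)
  refine ⟨?_, ?_, ?_⟩
  · -- independence
    intro W
    obtain ⟨c, hc⟩ := W.2
    have hle : (⨆ (W' : {W : Submodule 𝔽 V // ∃ i, W = classSpan b f i})
        (_ : W' ≠ W), W'.1) ≤
        Submodule.span 𝔽 (⇑b '' {j | ¬ Connected b f c j}) := by
      apply iSup_le; intro W'; apply iSup_le; intro hne
      obtain ⟨d, hd⟩ := W'.2
      have hdc : ¬ Connected b f c d := by
        apply hne_span
        intro hEq
        exact hne (Subtype.ext (by rw [hc, hd, hEq]))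
      rw [hd]
      apply Submodule.span_mono
      apply Set.image_mono
      intro j hj
      intro hcj
      exact hdc (connected_trans b f hcj (connected_symm b f hm hj))
    refine Disjoint.mono_right hle ?_
    show Disjoint W.1 _
    rw [hc]
    exact b.linearIndependent.disjoint_span_image
      (Set.disjoint_left.mpr fun j hj hj2 => hj2 hj)
  · -- supremum is ⊤
    rw [eq_top_iff, ← b.span_eq, Submodule.span_le]
    rintro x ⟨i, rfl⟩
    have h1 : b i ∈ classSpan b f i :=
      Submodule.subset_span ⟨i, connected_refl b f i, rfl⟩
    have h2 := le_iSup
      (fun W : {W : Submodule 𝔽 V // ∃ i, W = classSpan b f i} => W.1)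
      ⟨classSpan b f i, i, rfl⟩
    exact h2 h1
  · -- orthogonality
    intro W₁ W₂ hne
    obtain ⟨c, hc⟩ := W₁.2
    obtain ⟨d, hd⟩ := W₂.2
    have hcd : ¬ Connected b f c d := by
      apply hne_span
      intro hEq
      exact hne (Subtype.ext (by rw [hc, hd, hEq]))
    intro k₁ k₂ hk v hv₁ hv₂
    rw [hc] at hv₁; rw [hd] at hv₂
    exact forth_of_not_connected b f hm hcd hk v hv₁ hv₂
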